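/- For p > 1 there is a constant C₀ > 0 such that for all functions r₁ in the weighted space H₀ (with norm ‖r₁‖²_{H₀} = ∫_{-1}^{1}(r₁² + (r₁')²(1-y²))ρ dy, ρ = (1-y²)^{2/(p-1)}), the weighted sup bound ‖r₁ (1-y²)^{1/(p-1)}‖_{L^∞(-1,1)} ≤ C₀ ‖r₁‖_{H₀} holds. -/

import Mathlib

open MeasureTheory Set

lemma key_right (α a b t x X : ℝ) (hα : 0 < α) (ht1 : -(1/2) < t) (ht2 : t < 1)
    (hx : x = 1 - t^2) (hxpos : 0 < x) (hX : 0 ≤ X) :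
    2*a*b*(X*x) + a^2*(α * X * (-(2*t)))
      ≤ (4/3 + (4/3)*α + 1/α) * ((a^2 + b^2*x)*(X*x)) := by
  have hα' : 0 < 1/α := by positivity
  rcases le_or_gt t (1/2) with h | h
  · have hx34 : 3/4 ≤ x := by nlinarith
    have f1 : 0 ≤ (a-b)^2 * (X*x) := by positivity
    have f3 : 0 ≤ b^2 * X * x * (4*x - 3) := mul_nonneg (mul_nonneg (mul_nonneg (sq_nonneg b) hX) hxpos.le) (by linarith)
    have f4 : 0 ≤ (1/α) * ((a^2 + b^2*x)*(X*x)) := by positivity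
    have f5 : 0 ≤ a^2 * α * X * (1 + 2*t) :=
      mul_nonneg (mul_nonneg (mul_nonneg (sq_nonneg a) hα.le) hX) (by linarith)
    have f6 : 0 ≤ a^2 * α * X * (4*x - 3) :=
      mul_nonneg (mul_nonneg (mul_nonneg (sq_nonneg a) hα.le) hX) (by linarith)
    have f7 : 0 ≤ a^2 * (X*x) := by positivity
    have f8 : 0 ≤ (4/3)*α * (b^2*x) * (X*x) := by positivity
    nlinarith
  · have key : 2*(a*b*x)*X ≤ α*(a^2*X) + (1/α)*(b^2*x^2*X) := by
      have h0 : 0 ≤ (1/α) * X * (α*a - b*x)^2 := by positivity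
      have expand : (1/α) * X * (α*a-b*x)^2
          = α*(a^2*X) + (1/α)*(b^2*x^2*X) - 2*(a*b*x)*X := by
        field_simp; ring
      linarith [expand ▸ h0]
    have f2 : 0 ≤ a^2 * α * X * (2*t - 1) :=
      mul_nonneg (mul_nonneg (mul_nonneg (sq_nonneg a) hα.le) hX) (by linarith)
    have f3 : 0 ≤ (4/3 + (4/3)*α) * ((a^2 + b^2*x)*(X*x)) := by positivity
    have f4 : 0 ≤ (1/α) * (a^2*(X*x)) := by positivity
    nlinarith


lemma key_C (α a b t x X C : ℝ) (hα : 0 < α) (ht : -1 ≤ t) (hx : 0 < x) (hX : 0 ≤ X)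
    (hC2 : 1 ≤ C) (hC1 : 1 + 2*α ≤ x*C) :
    2*a*b*(X*x) + a^2*(α * X * (-(2*t))) ≤ C * ((a^2 + b^2*x)*(X*x)) := by
  have p1 : 0 ≤ (a - b*x)^2 * X := by positivity
  have p2 : 0 ≤ a^2*α*X*(1+t)*2 :=
    mul_nonneg (mul_nonneg (mul_nonneg (mul_nonneg (sq_nonneg a) hα.le) hX) (by linarith)) (by norm_num)
  have p3 : 0 ≤ a^2*X*(x*C - (1+2*α)) :=
    mul_nonneg (mul_nonneg (sq_nonneg a) hX) (by linarith)
  have p4 : 0 ≤ (C-1)*(b^2*x)*(X*x) :=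
    mul_nonneg (mul_nonneg (by linarith) (mul_nonneg (sq_nonneg b) hx.le)) (mul_nonneg hX hx.le)
  nlinarith [p1, p2, p3, p4]

lemma hasDerivAt_weighted_sq (r₁ : ℝ → ℝ) (α t : ℝ) (ht : t ∈ Set.Ioo (-1:ℝ) 1)
    (hd : DifferentiableAt ℝ r₁ t) :
    HasDerivAt (fun s => r₁ s ^ 2 * (1 - s^2) ^ α)
      (2 * r₁ t * deriv r₁ t * (1-t^2)^α + r₁ t ^2 * (α * (1-t^2)^(α-1) * (-(2*t)))) t := by
  have hx : (0:ℝ) < 1 - t^2 := by nlinarith [ht.1, ht.2]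
  have h1 : HasDerivAt (fun s:ℝ => 1 - s^2) (-(2*t)) t := by
    simpa using ((hasDerivAt_pow 2 t).const_sub 1)
  have h2 : HasDerivAt (fun s => (1-s^2)^α) (α * (1-t^2)^(α-1) * (-(2*t))) t := by
    have := (Real.hasDerivAt_rpow_const (x := 1 - t^2) (p := α) (Or.inl hx.ne')).comp t h1
    simpa [Function.comp_def, mul_assoc] using this
  have h3 : HasDerivAt (fun s => r₁ s ^2) (2 * r₁ t * deriv r₁ t) t := by
    have := hd.hasDerivAt.pow 2
    simpa [Pi.pow_def, mul_comm, mul_assoc, mul_left_comm] using this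
  exact h3.mul h2

theorem hardy_sobolev_weighted_sup (p : ℝ) (hp : 1 < p) :
    ∃ C₀ > 0, ∀ r₁ : ℝ → ℝ,
      (∀ y ∈ Set.Ioo (-1 : ℝ) 1, DifferentiableAt ℝ r₁ y) →
      MeasureTheory.IntegrableOn
        (fun y => (r₁ y ^ 2 + (deriv r₁ y) ^ 2 * (1 - y ^ 2)) * (1 - y ^ 2) ^ (2 / (p - 1)))
        (Set.Ioo (-1 : ℝ) 1) →
      ∀ y ∈ Set.Ioo (-1 : ℝ) 1,
        |r₁ y| * (1 - y ^ 2) ^ (1 / (p - 1))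
          ≤ C₀ * Real.sqrt (∫ y in Set.Ioo (-1 : ℝ) 1,
              (r₁ y ^ 2 + (deriv r₁ y) ^ 2 * (1 - y ^ 2)) * (1 - y ^ 2) ^ (2 / (p - 1))) := by
  have hp1 : (0:ℝ) < p - 1 := by linarith
  obtain ⟨α, hαdef⟩ : ∃ a : ℝ, a = 2 / (p-1) := ⟨_, rfl⟩
  have hα : 0 < α := by rw [hαdef]; positivity
  set K : ℝ := 4/3 + (4/3)*α + 1/α with hKdef
  have hK : 0 < K := by positivity
  refine ⟨Real.sqrt (1 + K), Real.sqrt_pos.mpr (by positivity), ?_⟩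
  intro r₁ hdiff hint y hy
  rw [← hαdef] at hint ⊢
  set F : ℝ → ℝ := fun t => (r₁ t ^ 2 + (deriv r₁ t) ^ 2 * (1 - t ^ 2)) * (1 - t ^ 2) ^ α with hFdef
  set G : ℝ → ℝ := fun t => r₁ t ^ 2 * (1 - t ^ 2) ^ α with hGdef
  set G' : ℝ → ℝ := fun t =>
    2 * r₁ t * deriv r₁ t * (1-t^2)^α + r₁ t ^2 * (α * (1-t^2)^(α-1) * (-(2*t))) with hG'def
  set I : ℝ := ∫ t in Set.Ioo (-1:ℝ) 1, F t with hIdef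
  have hxpos : ∀ t ∈ Set.Ioo (-1:ℝ) 1, (0:ℝ) < 1 - t^2 := by
    intro t ht; nlinarith [ht.1, ht.2]
  have hF0 : ∀ t ∈ Set.Ioo (-1:ℝ) 1, 0 ≤ F t := by
    intro t ht
    have := hxpos t ht
    have h1 : (0:ℝ) ≤ (1-t^2)^α := Real.rpow_nonneg this.le α
    have h2 : (0:ℝ) ≤ r₁ t ^2 + (deriv r₁ t)^2 * (1-t^2) := by positivity
    exact mul_nonneg h2 h1
  have hGF : ∀ t ∈ Set.Ioo (-1:ℝ) 1, G t ≤ F t := by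
    intro t ht
    have := hxpos t ht
    have h1 : (0:ℝ) ≤ (1-t^2)^α := Real.rpow_nonneg this.le α
    have : (0:ℝ) ≤ (deriv r₁ t)^2 * (1-t^2) := by positivity
    simp only [hGdef, hFdef]
    nlinarith
  have hI0 : 0 ≤ I := setIntegral_nonneg measurableSet_Ioo hF0
  have hF0ae : 0 ≤ᵐ[volume.restrict (Set.Ioo (-1:ℝ) 1)] F :=
    (ae_restrict_iff' measurableSet_Ioo).mpr (Filter.Eventually.of_forall hF0)
  have hrc : ContinuousOn r₁ (Set.Ioo (-1:ℝ) 1) :=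
    fun t ht => (hdiff t ht).continuousAt.continuousWithinAt
  have hGc : ContinuousOn G (Set.Ioo (-1:ℝ) 1) := by
    apply (hrc.pow 2).mul
    apply ContinuousOn.rpow_const
    · exact (continuousOn_const.sub ((continuous_pow 2).continuousOn))
    · exact fun t ht => Or.inl (hxpos t ht).ne'
  have hGderiv : ∀ t ∈ Set.Ioo (-1:ℝ) 1, HasDerivAt G (G' t) t :=
    fun t ht => hasDerivAt_weighted_sq r₁ α t ht (hdiff t ht)
  -- base point
  have hsub12 : Set.Ioo (-(1/2):ℝ) (1/2) ⊆ Set.Ioo (-1:ℝ) 1 := by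
    intro t ht; exact ⟨by linarith [ht.1], by linarith [ht.2]⟩
  have hGint12 : IntegrableOn G (Set.Ioo (-(1/2):ℝ) (1/2)) := by
    have : IntegrableOn G (Set.Icc (-(1/2):ℝ) (1/2)) := by
      apply ContinuousOn.integrableOn_Icc
      apply hGc.mono
      intro t ht
      exact ⟨by linarith [ht.1], by linarith [ht.2]⟩
    exact this.mono_set Set.Ioo_subset_Icc_self
  have hμ12 : volume (Set.Ioo (-(1/2):ℝ) (1/2)) = ENNReal.ofReal 1 := by
    rw [Real.volume_Ioo]; norm_num
  obtain ⟨y₀, hy₀s, hy₀avg⟩ := MeasureTheory.exists_le_setAverage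
    (μ := volume) (s := Set.Ioo (-(1/2):ℝ) (1/2)) (by simp [hμ12]) (by simp [hμ12]) hGint12
  have hbase : G y₀ ≤ I := by
    have havg : ⨍ t in Set.Ioo (-(1/2):ℝ) (1/2), G t ∂volume
        = ∫ t in Set.Ioo (-(1/2):ℝ) (1/2), G t := by
      rw [MeasureTheory.setAverage_eq, Measure.real_def, hμ12]
      norm_num
    have h1 : ∫ t in Set.Ioo (-(1/2):ℝ) (1/2), G t ≤ ∫ t in Set.Ioo (-(1/2):ℝ) (1/2), F t :=
      setIntegral_mono_on hGint12 (hint.mono_set hsub12) measurableSet_Ioo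
        (fun t ht => hGF t (hsub12 ht))
    have h2 : ∫ t in Set.Ioo (-(1/2):ℝ) (1/2), F t ≤ I :=
      setIntegral_mono_set hint hF0ae (HasSubset.Subset.eventuallyLE hsub12)
    calc G y₀ ≤ _ := hy₀avg
      _ = _ := havg
      _ ≤ _ := h1
      _ ≤ I := h2
  -- basic rpow splitting
  have hXX : ∀ t ∈ Set.Ioo (-1:ℝ) 1, (1-t^2)^α = (1-t^2)^(α-1) * (1-t^2) := by
    intro t ht
    have hx := hxpos t ht
    have h := Real.rpow_add_one hx.ne' (α-1)
    rw [sub_add_cancel] at h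
    exact h
  -- pointwise bounds on G'
  have hKbound : ∀ t ∈ Set.Ioo (-1:ℝ) 1, -(1/2) < t → G' t ≤ K * F t := by
    intro t ht ht'
    have hx := hxpos t ht
    have hX : (0:ℝ) ≤ (1-t^2)^(α-1) := Real.rpow_nonneg hx.le _
    have hxx := hXX t ht
    have h := key_right α (r₁ t) (deriv r₁ t) t (1-t^2) ((1-t^2)^(α-1)) hα ht' ht.2 rfl hx hX
    have hGt : G' t = 2*(r₁ t)*(deriv r₁ t)*((1-t^2)^(α-1)*(1-t^2))
        + (r₁ t)^2*(α*((1-t^2)^(α-1))*(-(2*t))) := by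
      simp only [hG'def]; rw [hxx]
    have hFt : K * F t = (4/3 + (4/3)*α + 1/α) * (((r₁ t)^2 + (deriv r₁ t)^2*(1-t^2))
        * ((1-t^2)^(α-1)*(1-t^2))) := by
      simp only [hFdef, hKdef]; rw [hxx]
    rw [hGt, hFt]
    exact h
  have hKbound' : ∀ t ∈ Set.Ioo (-1:ℝ) 1, t < 1/2 → -(G' t) ≤ K * F t := by
    intro t ht ht'
    have hx := hxpos t ht
    have hX : (0:ℝ) ≤ (1-t^2)^(α-1) := Real.rpow_nonneg hx.le _
    have hxx := hXX t ht
    have h := key_right α (r₁ t) (-(deriv r₁ t)) (-t) (1-t^2) ((1-t^2)^(α-1)) hα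
      (by linarith) (by linarith [ht.1]) (by ring) hx hX
    have hGt : -(G' t) = 2*(r₁ t)*(-(deriv r₁ t))*((1-t^2)^(α-1)*(1-t^2))
        + (r₁ t)^2*(α*((1-t^2)^(α-1))*(-(2*(-t)))) := by
      simp only [hG'def]; rw [hxx]; ring
    have hFt : K * F t = (4/3 + (4/3)*α + 1/α) * (((r₁ t)^2 + (-(deriv r₁ t))^2*(1-t^2))
        * ((1-t^2)^(α-1)*(1-t^2))) := by
      simp only [hFdef, hKdef]; rw [hxx]; ring
    rw [hGt, hFt]
    exact h
  -- integrability of G' on compact subintervals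
  have hG'int : ∀ u v : ℝ, u ∈ Set.Ioo (-1:ℝ) 1 → v ∈ Set.Ioo (-1:ℝ) 1 → u ≤ v →
      IntervalIntegrable G' volume u v := by
    intro u v hu hv huv
    rw [intervalIntegrable_iff_integrableOn_Ioc_of_le huv]
    have hsubuv : Set.Ioc u v ⊆ Set.Ioo (-1:ℝ) 1 := by
      intro t ht; exact ⟨lt_trans hu.1 ht.1, lt_of_le_of_lt ht.2 hv.2⟩
    set m : ℝ := 1 - max (u^2) (v^2) with hm
    have hm0 : 0 < m := by
      have h1 : u^2 < 1 := by nlinarith [hu.1, hu.2]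
      have h2 : v^2 < 1 := by nlinarith [hv.1, hv.2]
      have := max_lt h1 h2
      simp only [hm]; linarith
    have hmx : ∀ t ∈ Set.Ioc u v, m ≤ 1 - t^2 := by
      intro t ht
      have h1 : t^2 ≤ max (u^2) (v^2) := by
        rcases le_or_gt 0 t with h | h
        · exact le_max_of_le_right (by nlinarith [ht.2])
        · exact le_max_of_le_left (by nlinarith [ht.1])
      simp only [hm]; linarith
    set C : ℝ := (1 + 2*α)/m + 1 with hC
    have hCpos : 0 < (1 + 2*α)/m := by positivity
    have hC2 : 1 ≤ C := by simp only [hC]; linarith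
    have hmC : 1 + 2*α ≤ m * C := by
      have : m * C = 1 + 2*α + m := by rw [hC]; field_simp
      linarith
    have hFuv : IntegrableOn F (Set.Ioc u v) := hint.mono_set hsubuv
    apply MeasureTheory.Integrable.mono' (hFuv.const_mul C)
    · have h1 : AEStronglyMeasurable r₁ (volume.restrict (Set.Ioc u v)) :=
        (hrc.mono hsubuv).aestronglyMeasurable measurableSet_Ioc
      have h2 : AEStronglyMeasurable (deriv r₁) (volume.restrict (Set.Ioc u v)) :=
        (measurable_deriv r₁).aestronglyMeasurable
      have h3 : AEStronglyMeasurable (fun t : ℝ => (1-t^2)^α) (volume.restrict (Set.Ioc u v)) := by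
        apply ContinuousOn.aestronglyMeasurable _ measurableSet_Ioc
        apply ContinuousOn.rpow_const
          (continuousOn_const.sub ((continuous_pow 2).continuousOn))
        exact fun t ht => Or.inl (hxpos t (hsubuv ht)).ne'
      have h4 : AEStronglyMeasurable (fun t : ℝ => α * (1-t^2)^(α-1) * (-(2*t)))
          (volume.restrict (Set.Ioc u v)) := by
        apply ContinuousOn.aestronglyMeasurable _ measurableSet_Ioc
        apply ContinuousOn.mul
        · apply ContinuousOn.mul continuousOn_const
          apply ContinuousOn.rpow_const
            (continuousOn_const.sub ((continuous_pow 2).continuousOn))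
          exact fun t ht => Or.inl (hxpos t (hsubuv ht)).ne'
        · exact (continuous_const.mul continuous_id).neg.continuousOn
      have h5 : AEStronglyMeasurable (fun t : ℝ => r₁ t ^ 2)
          (volume.restrict (Set.Ioc u v)) := by
        simpa [pow_two, Pi.mul_def] using h1.mul h1
      exact (((aestronglyMeasurable_const.mul h1).mul h2).mul h3).add (h5.mul h4)
    · rw [ae_restrict_iff' measurableSet_Ioc]
      apply Filter.Eventually.of_forall
      intro t ht
      have htI := hsubuv ht
      have hx := hxpos t htI
      have hX : (0:ℝ) ≤ (1-t^2)^(α-1) := Real.rpow_nonneg hx.le _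
      have hxx := hXX t htI
      have hxC : 1 + 2*α ≤ (1-t^2)*C := by
        have h := mul_le_mul_of_nonneg_right (hmx t ht) (by linarith : (0:ℝ) ≤ C)
        linarith
      have eF : C * F t = C * (((r₁ t)^2 + (deriv r₁ t)^2*(1-t^2))
          * ((1-t^2)^(α-1)*(1-t^2))) := by
        simp only [hFdef]; rw [hxx]
      rw [Real.norm_eq_abs, abs_le]
      constructor
      · have h := key_C α (r₁ t) (-(deriv r₁ t)) (-t) (1-t^2) ((1-t^2)^(α-1)) C hα
          (by linarith [htI.2]) hx hX hC2 hxC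
        have hGt : -(G' t) = 2*(r₁ t)*(-(deriv r₁ t))*((1-t^2)^(α-1)*(1-t^2))
            + (r₁ t)^2*(α*((1-t^2)^(α-1))*(-(2*(-t)))) := by
          simp only [hG'def]; rw [hxx]; ring
        have hF2 : C * (((r₁ t)^2 + (-(deriv r₁ t))^2*(1-t^2)) * ((1-t^2)^(α-1)*(1-t^2)))
            = C * F t := by simp only [hFdef]; rw [hxx]; ring
        have h2 : -(G' t) ≤ C * F t := by
          rw [hGt]
          exact le_trans h (le_of_eq hF2)
        linarith
      · have h := key_C α (r₁ t) (deriv r₁ t) t (1-t^2) ((1-t^2)^(α-1)) C hα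
          (by linarith [htI.1]) hx hX hC2 hxC
        have hGt : G' t = 2*(r₁ t)*(deriv r₁ t)*((1-t^2)^(α-1)*(1-t^2))
            + (r₁ t)^2*(α*((1-t^2)^(α-1))*(-(2*t))) := by
          simp only [hG'def]; rw [hxx]
        rw [hGt, eF]
        exact h
  -- interval integrability of F
  have hFIoc : ∀ u v : ℝ, u ∈ Set.Ioo (-1:ℝ) 1 → v ∈ Set.Ioo (-1:ℝ) 1 → u ≤ v →
      IntervalIntegrable F volume u v := by
    intro u v hu hv huv
    rw [intervalIntegrable_iff_integrableOn_Ioc_of_le huv]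
    exact hint.mono_set (fun t ht => ⟨lt_trans hu.1 ht.1, lt_of_le_of_lt ht.2 hv.2⟩)
  have hy₀I : y₀ ∈ Set.Ioo (-1:ℝ) 1 := hsub12 hy₀s
  -- main estimate
  have hmain : G y ≤ (1 + K) * I := by
    rcases le_total y₀ y with hc | hc
    · have hIcc : Set.Icc y₀ y ⊆ Set.Ioo (-1:ℝ) 1 :=
        fun t ht => ⟨lt_of_lt_of_le hy₀I.1 ht.1, lt_of_le_of_lt ht.2 hy.2⟩
      have hftc := intervalIntegral.integral_eq_sub_of_hasDerivAt
        (f := G) (f' := G')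
        (fun t ht => hGderiv t (hIcc ((Set.uIcc_of_le hc) ▸ ht)))
        (hG'int y₀ y hy₀I hy hc)
      have hmono : (∫ t in y₀..y, G' t) ≤ ∫ t in y₀..y, K * F t := by
        apply intervalIntegral.integral_mono_on hc (hG'int y₀ y hy₀I hy hc)
          ((hFIoc y₀ y hy₀I hy hc).const_mul K)
        intro t ht
        exact hKbound t (hIcc ht) (lt_of_lt_of_le hy₀s.1 ht.1)
      have hKF : (∫ t in y₀..y, K * F t) = K * ∫ t in y₀..y, F t :=
        intervalIntegral.integral_const_mul K F
      have hFI : (∫ t in y₀..y, F t) ≤ I := by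
        rw [intervalIntegral.integral_of_le hc]
        exact setIntegral_mono_set hint hF0ae
          (HasSubset.Subset.eventuallyLE
            (fun t ht => ⟨lt_trans hy₀I.1 ht.1, lt_of_le_of_lt ht.2 hy.2⟩))
      have hKFI : K * (∫ t in y₀..y, F t) ≤ K * I := mul_le_mul_of_nonneg_left hFI hK.le
      linarith [hftc]
    · have hIcc : Set.Icc y y₀ ⊆ Set.Ioo (-1:ℝ) 1 :=
        fun t ht => ⟨lt_of_lt_of_le hy.1 ht.1, lt_of_le_of_lt ht.2 hy₀I.2⟩
      have hftc := intervalIntegral.integral_eq_sub_of_hasDerivAt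
        (f := G) (f' := G')
        (fun t ht => hGderiv t (hIcc ((Set.uIcc_of_le hc) ▸ ht)))
        (hG'int y y₀ hy hy₀I hc)
      have hmono : (∫ t in y..y₀, -(K * F t)) ≤ ∫ t in y..y₀, G' t := by
        apply intervalIntegral.integral_mono_on hc
          ((hFIoc y y₀ hy hy₀I hc).const_mul K).neg (hG'int y y₀ hy hy₀I hc)
        intro t ht
        have := hKbound' t (hIcc ht) (lt_of_le_of_lt ht.2 hy₀s.2)
        show -(K * F t) ≤ G' t
        linarith
      have hKF : (∫ t in y..y₀, -(K * F t)) = -(K * ∫ t in y..y₀, F t) := by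
        rw [intervalIntegral.integral_neg, intervalIntegral.integral_const_mul]
      have hFI : (∫ t in y..y₀, F t) ≤ I := by
        rw [intervalIntegral.integral_of_le hc]
        exact setIntegral_mono_set hint hF0ae
          (HasSubset.Subset.eventuallyLE
            (fun t ht => ⟨lt_trans hy.1 ht.1, lt_of_le_of_lt ht.2 hy₀I.2⟩))
      have hKFI : K * (∫ t in y..y₀, F t) ≤ K * I := mul_le_mul_of_nonneg_left hFI hK.le
      linarith [hftc]
  -- conclusion
  have hxy := hxpos y hy
  have hsq : (|r₁ y| * (1 - y^2) ^ (1/(p-1)))^2 = G y := by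
    rw [mul_pow, sq_abs]
    simp only [hGdef]
    congr 1
    rw [← Real.rpow_natCast ((1-y^2)^(1/(p-1))) 2, ← Real.rpow_mul hxy.le]
    congr 1
    rw [hαdef]
    push_cast
    ring
  calc |r₁ y| * (1 - y^2)^(1/(p-1))
      = Real.sqrt ((|r₁ y| * (1-y^2)^(1/(p-1)))^2) :=
        (Real.sqrt_sq (mul_nonneg (abs_nonneg _) (Real.rpow_nonneg hxy.le _))).symm
    _ = Real.sqrt (G y) := by rw [hsq]
    _ ≤ Real.sqrt ((1+K) * I) := Real.sqrt_le_sqrt hmain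
    _ = Real.sqrt (1+K) * Real.sqrt I := Real.sqrt_mul (by positivity) I
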